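/- Let Φ be a positive linear map from the n×n complex matrices to themselves with Φ(1) ≤ 1 (a contractive positive map), let x be a Hermitian n×n complex matrix, let f : ℝ → ℝ be a continuous convex function with f(0) = 0, and let I ⊆ ℝ be an interval on which f is monotone and on which f(t) ≥ 0. Set p := e_I(Φ(x)), the spectral projection of Φ(x) on I. Then p·Φ(f(x))·p is positive semidefinite, and for every s > 0 one has rank e_{(s,∞)}(p·f(Φ(x))·p) ≤ rank e_{(s,∞)}(p·Φ(f(x))·p). -/

import Mathlib

open Matrix
open scoped ComplexOrder

/-- `g` applied to a Hermitian matrix via the functional calculus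
(`g(A) = ∑ᵢ g(λᵢ) Pᵢ` for the spectral decomposition `A = ∑ᵢ λᵢ Pᵢ`). -/
noncomputable def matFun {k : ℕ} {A : Matrix (Fin k) (Fin k) ℂ} (hA : A.IsHermitian)
    (g : ℝ → ℝ) : Matrix (Fin k) (Fin k) ℂ := hA.cfc g

lemma matFun_isHermitian {k : ℕ} {A : Matrix (Fin k) (Fin k) ℂ} (hA : A.IsHermitian)
    (g : ℝ → ℝ) : (matFun hA g).IsHermitian := by
  rw [matFun, ← hA.cfc_eq g]
  exact cfc_predicate g A

/-- The spectral projection `e_S(A) = ∑_{i : λᵢ ∈ S} Pᵢ` of a Hermitian matrix `A`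
on a set `S ⊆ ℝ`. -/
noncomputable def specProj {k : ℕ} {A : Matrix (Fin k) (Fin k) ℂ} (hA : A.IsHermitian)
    (S : Set ℝ) : Matrix (Fin k) (Fin k) ℂ := matFun hA (Set.indicator S 1)


section helpers
variable {k : ℕ} {A : Matrix (Fin k) (Fin k) ℂ} (hA : A.IsHermitian)

lemma contOn_finite {s : Set ℝ} (hs : s.Finite) (g : ℝ → ℝ) : ContinuousOn g s := by
  have : Finite s := hs
  have : DiscreteTopology s := Finite.instDiscreteTopology
  rw [continuousOn_iff_continuous_restrict]
  exact continuous_of_discreteTopology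

lemma contOn_spectrum (g : ℝ → ℝ) (A : Matrix (Fin k) (Fin k) ℂ) :
    ContinuousOn g (spectrum ℝ A) :=
  contOn_finite A.finite_real_spectrum g

lemma matFun_eq_cfc (g : ℝ → ℝ) : matFun hA g = cfc g A := (hA.cfc_eq g).symm

lemma matFun_congr {B : Matrix (Fin k) (Fin k) ℂ} (hB : B.IsHermitian) (h : A = B)
    (g : ℝ → ℝ) : matFun hA g = matFun hB g := by
  rw [matFun_eq_cfc, matFun_eq_cfc, h]

lemma matFun_mul (g h : ℝ → ℝ) :
    matFun hA g * matFun hA h = matFun hA (fun t => g t * h t) := by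
  rw [matFun_eq_cfc, matFun_eq_cfc, matFun_eq_cfc, ← cfc_mul g h A
    (contOn_spectrum g A) (contOn_spectrum h A)]

lemma matFun_comp (g h : ℝ → ℝ) :
    matFun (matFun_isHermitian hA g) h = matFun hA (fun t => h (g t)) := by
  rw [matFun_eq_cfc, matFun_eq_cfc, matFun_eq_cfc]
  exact (cfc_comp h g A hA (contOn_finite (Matrix.finite_real_spectrum.image g) h)
    (contOn_spectrum g A)).symm

lemma matFun_one : matFun hA (fun _ => 1) = 1 := by
  rw [matFun_eq_cfc]; exact cfc_const_one ℝ A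

lemma matFun_id : matFun hA (fun t => t) = A := by
  rw [matFun_eq_cfc]; exact cfc_id' ℝ A

/-- coordinates of `ξ` in the eigenbasis -/
noncomputable def eta {k : ℕ} {A : Matrix (Fin k) (Fin k) ℂ} (hA : A.IsHermitian)
    (ξ : Fin k → ℂ) : Fin k → ℂ :=
  (star (hA.eigenvectorUnitary : Matrix (Fin k) (Fin k) ℂ)) *ᵥ ξ

lemma eta_matFun_mulVec (g : ℝ → ℝ) (ξ : Fin k → ℂ) (i : Fin k) :
    eta hA (matFun hA g *ᵥ ξ) i = (g (hA.eigenvalues i) : ℂ) * eta hA ξ i := by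
  unfold eta matFun Matrix.IsHermitian.cfc
  rw [Unitary.conjStarAlgAut_apply, mulVec_mulVec, ← mul_assoc, ← mul_assoc,
    Unitary.coe_star_mul_self, one_mul, ← mulVec_mulVec]
  simp [mulVec_diagonal]

lemma quadform_eq (g : ℝ → ℝ) (ξ : Fin k → ℂ) :
    star ξ ⬝ᵥ (matFun hA g *ᵥ ξ)
      = ((∑ i, g (hA.eigenvalues i) * Complex.normSq (eta hA ξ i) : ℝ) : ℂ) := by
  have hU : (star ξ) ᵥ* (hA.eigenvectorUnitary : Matrix (Fin k) (Fin k) ℂ)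
      = star (eta hA ξ) := by
    rw [eta, star_mulVec, star_eq_conjTranspose, conjTranspose_conjTranspose]
  conv_lhs => rw [matFun, Matrix.IsHermitian.cfc, Unitary.conjStarAlgAut_apply]
  rw [← mulVec_mulVec, ← mulVec_mulVec, dotProduct_mulVec, hU]
  rw [show (star (hA.eigenvectorUnitary : Matrix (Fin k) (Fin k) ℂ)) *ᵥ ξ = eta hA ξ from rfl]
  rw [Complex.ofReal_sum]
  simp only [dotProduct, mulVec_diagonal, Pi.star_apply, Function.comp_apply]
  congr 1; ext i
  rw [Complex.ofReal_mul, Complex.star_def, mul_comm, mul_assoc, Complex.mul_conj]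
  norm_num [RCLike.ofReal]

lemma norm_sq_eq (ξ : Fin k → ℂ) :
    star ξ ⬝ᵥ ξ = ((∑ i, Complex.normSq (eta hA ξ i) : ℝ) : ℂ) := by
  have := quadform_eq hA (fun _ => 1) ξ
  rw [matFun_one, one_mulVec] at this
  simpa using this

lemma matFun_psd (g : ℝ → ℝ) (hg : ∀ i, 0 ≤ g (hA.eigenvalues i)) :
    (matFun hA g).PosSemidef := by
  refine Matrix.PosSemidef.of_dotProduct_mulVec_nonneg (matFun_isHermitian hA g) (fun ξ => ?_)
  rw [quadform_eq, Complex.zero_le_real]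
  exact Finset.sum_nonneg fun i _ => mul_nonneg (hg i) (Complex.normSq_nonneg _)

lemma matFun_rank [DecidableEq ℝ] (g : ℝ → ℝ) :
    (matFun hA g).rank = Fintype.card {i // g (hA.eigenvalues i) ≠ 0} := by
  unfold matFun Matrix.IsHermitian.cfc
  rw [Unitary.conjStarAlgAut_apply, rank_mul_eq_left_of_isUnit_det, rank_mul_eq_right_of_isUnit_det, rank_diagonal]
  · exact Fintype.card_congr (Equiv.subtypeEquivRight fun i => by
      simp [Function.comp, Complex.ofReal_ne_zero])
  · exact (Matrix.isUnit_iff_isUnit_det _).mp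
      ⟨Unitary.toUnits hA.eigenvectorUnitary, rfl⟩
  · exact (Matrix.isUnit_iff_isUnit_det _).mp
      (IsUnit.star ⟨Unitary.toUnits hA.eigenvectorUnitary, rfl⟩)

lemma exists_supporting_line {f : ℝ → ℝ} (hconv : ConvexOn ℝ Set.univ f) (μ : ℝ)
    (T : Finset ℝ) : ∃ a : ℝ, ∀ t ∈ T, f μ + a * (t - μ) ≤ f t := by
  classical
  set L : Finset ℝ := insert (μ - 1) (T.filter (· < μ)) with hL
  have hLne : L.Nonempty := ⟨μ - 1, Finset.mem_insert_self _ _⟩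
  have hLlt : ∀ u ∈ L, u < μ := by
    intro u hu
    rcases Finset.mem_insert.mp hu with h | h
    · linarith [h.le]
    · exact (Finset.mem_filter.mp h).2
  set a := (L.image (fun u => (f μ - f u) / (μ - u))).max' (hLne.image _) with ha
  refine ⟨a, fun t ht => ?_⟩
  rcases lt_trichotomy t μ with h | h | h
  · have hmem : (f μ - f t) / (μ - t) ∈ L.image (fun u => (f μ - f u) / (μ - u)) :=
      Finset.mem_image_of_mem _ (Finset.mem_insert_of_mem (Finset.mem_filter.mpr ⟨ht, h⟩))
    have hle := Finset.le_max' _ _ hmem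
    rw [← ha, div_le_iff₀ (by linarith)] at hle
    nlinarith
  · simp [h]
  · have haux : a ≤ (f t - f μ) / (t - μ) := by
      apply Finset.max'_le
      intro y hy
      obtain ⟨u, hu, rfl⟩ := Finset.mem_image.mp hy
      exact hconv.slope_mono_adjacent (Set.mem_univ u) (Set.mem_univ t) (hLlt u hu) h
    rw [le_div_iff₀ (by linarith)] at haux
    nlinarith

lemma matFun_sub (g h : ℝ → ℝ) :
    matFun hA (fun t => g t - h t) = matFun hA g - matFun hA h := by
  rw [matFun_eq_cfc, matFun_eq_cfc, matFun_eq_cfc]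
  exact cfc_sub g h A (contOn_spectrum g A) (contOn_spectrum h A)

lemma matFun_line (a b : ℝ) :
    matFun hA (fun t => a * t + b) = a • A + b • (1 : Matrix (Fin k) (Fin k) ℂ) := by
  rw [matFun_eq_cfc]
  have h1 := cfc_add_const (R := ℝ) b (fun t => a * t) A (contOn_spectrum _ A) hA
  rw [h1, cfc_const_mul a (fun t : ℝ => t) A (contOn_spectrum _ A), cfc_id' ℝ A,
    Algebra.algebraMap_eq_smul_one]

lemma compress_quadform {p M : Matrix (Fin k) (Fin k) ℂ} (hp : p.IsHermitian)
    (ξ : Fin k → ℂ) :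
    star ξ ⬝ᵥ ((p * M * p) *ᵥ ξ) = star (p *ᵥ ξ) ⬝ᵥ (M *ᵥ (p *ᵥ ξ)) := by
  rw [← mulVec_mulVec, ← mulVec_mulVec, dotProduct_mulVec (star ξ),
    star_mulVec, hp.eq]

end helpers

section core
variable {n : ℕ}
    (Φ : Matrix (Fin n) (Fin n) ℂ →ₗ[ℂ] Matrix (Fin n) (Fin n) ℂ)
    (hΦpos : ∀ y : Matrix (Fin n) (Fin n) ℂ, y.PosSemidef → (Φ y).PosSemidef)
    (hΦ1 : (1 - Φ 1).PosSemidef)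
    {x : Matrix (Fin n) (Fin n) ℂ} (hx : x.IsHermitian)
    (f : ℝ → ℝ) (hconv : ConvexOn ℝ Set.univ f) (hf0 : f 0 = 0)

include hΦpos hΦ1 hconv hf0 in
lemma jensen_core (hΦx : (Φ x).IsHermitian) (ξ : Fin n → ℂ) (μ : ℝ)
    (hμ : (∑ i, hΦx.eigenvalues i * Complex.normSq (eta hΦx ξ i))
        = μ * (∑ i, Complex.normSq (eta hΦx ξ i))) :
    f μ * (∑ i, Complex.normSq (eta hΦx ξ i)) ≤ (star ξ ⬝ᵥ (Φ (matFun hx f)) *ᵥ ξ).re := by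
  classical
  set w := ∑ i, Complex.normSq (eta hΦx ξ i) with hw
  have hw0 : 0 ≤ w := Finset.sum_nonneg fun i _ => Complex.normSq_nonneg _
  obtain ⟨a, hline⟩ := exists_supporting_line hconv μ
    (insert 0 (Finset.image hx.eigenvalues Finset.univ))
  set b := f μ - a * μ with hb
  have hb0 : b ≤ 0 := by
    have := hline 0 (Finset.mem_insert_self _ _)
    rw [hf0] at this; simp only [hb]; linarith
  have hev : ∀ i, 0 ≤ f (hx.eigenvalues i) - (a * hx.eigenvalues i + b) := by
    intro i
    have := hline (hx.eigenvalues i)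
      (Finset.mem_insert_of_mem (Finset.mem_image_of_mem _ (Finset.mem_univ i)))
    simp only [hb]; linarith
  have hN : (matFun hx (fun t => f t - (a * t + b))).PosSemidef := matFun_psd hx _ hev
  have hdecomp : matFun hx (fun t => f t - (a * t + b))
      = matFun hx f - (a • x + b • (1 : Matrix (Fin n) (Fin n) ℂ)) := by
    rw [matFun_sub hx f (fun t => a * t + b), matFun_line hx a b]
  have hPN : (Φ (matFun hx (fun t => f t - (a * t + b)))).PosSemidef := hΦpos _ hN
  rw [hdecomp, map_sub, map_add, LinearMap.map_smul_of_tower, LinearMap.map_smul_of_tower] at hPN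
  -- quadratic form at ξ
  have h1 := hPN.dotProduct_mulVec_nonneg ξ
  have h2 := hΦ1.dotProduct_mulVec_nonneg ξ
  rw [Complex.le_def] at h1 h2
  have e1 : star ξ ⬝ᵥ ((Φ (matFun hx f) - (a • Φ x + b • Φ 1)) *ᵥ ξ)
      = star ξ ⬝ᵥ (Φ (matFun hx f) *ᵥ ξ) - (a • (star ξ ⬝ᵥ (Φ x *ᵥ ξ))
        + b • (star ξ ⬝ᵥ (Φ 1 *ᵥ ξ))) := by
    rw [sub_mulVec, add_mulVec, smul_mulVec, smul_mulVec,
      dotProduct_sub, dotProduct_add, dotProduct_smul, dotProduct_smul]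
  have e2 : star ξ ⬝ᵥ ((1 - Φ 1 : Matrix (Fin n) (Fin n) ℂ) *ᵥ ξ)
      = star ξ ⬝ᵥ ξ - star ξ ⬝ᵥ (Φ 1 *ᵥ ξ) := by
    rw [sub_mulVec, one_mulVec, dotProduct_sub]
  rw [e1] at h1
  rw [e2] at h2
  have hAq : (star ξ ⬝ᵥ (Φ x *ᵥ ξ)).re = μ * w := by
    have := quadform_eq hΦx (fun t => t) ξ
    rw [matFun_id hΦx] at this
    rw [this, hμ]; simp
  have hwq : (star ξ ⬝ᵥ ξ).re = w := by
    rw [norm_sq_eq hΦx ξ]; simp [hw]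
  have hΦ1q : (star ξ ⬝ᵥ (Φ 1 *ᵥ ξ)).re ≤ w := by
    have := h2.1
    simp only [Complex.zero_re, Complex.sub_re, hwq] at this
    linarith
  have h1re := h1.1
  simp only [Complex.zero_re, Complex.sub_re, Complex.add_re, Complex.real_smul,
    Complex.mul_re, Complex.ofReal_re, Complex.ofReal_im] at h1re
  have hb1 : b * (star ξ ⬝ᵥ (Φ 1 *ᵥ ξ)).re ≥ b * w :=
    mul_le_mul_of_nonpos_left hΦ1q hb0
  rw [hAq] at h1re
  have key : f μ * w = a * (μ * w) + b * w := by rw [hb]; ring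
  linarith
end core

section more
variable {k : ℕ} {A : Matrix (Fin k) (Fin k) ℂ} (hA : A.IsHermitian)

lemma unitary_mulVec_eta (ξ : Fin k → ℂ) :
    (hA.eigenvectorUnitary : Matrix (Fin k) (Fin k) ℂ) *ᵥ eta hA ξ = ξ := by
  rw [eta, mulVec_mulVec, Unitary.mul_star_self_of_mem (SetLike.coe_mem _), one_mulVec]

lemma eq_zero_of_eta_zero {ξ : Fin k → ℂ} (h : ∀ i, eta hA ξ i = 0) : ξ = 0 := by
  have := unitary_mulVec_eta hA ξ
  rw [show eta hA ξ = 0 from funext h, mulVec_zero] at this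
  exact this.symm

lemma herm_quadform_im {M : Matrix (Fin k) (Fin k) ℂ} (hM : M.IsHermitian)
    (ξ : Fin k → ℂ) : (star ξ ⬝ᵥ (M *ᵥ ξ)).im = 0 := by
  rw [← Complex.conj_eq_iff_im]
  calc (starRingEnd ℂ) (star ξ ⬝ᵥ M *ᵥ ξ)
      = star (star ξ ⬝ᵥ M *ᵥ ξ) := rfl
    _ = star (M *ᵥ ξ) ⬝ᵥ star (star ξ) := by rw [star_dotProduct_star]
    _ = star ξ ⬝ᵥ M *ᵥ ξ := by
        rw [star_star, star_mulVec, hM.eq, ← dotProduct_mulVec]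

lemma max_sub_max_neg (t : ℝ) : max t 0 - max (-t) 0 = t := by
  rcases le_total t 0 with h | h
  · rw [max_eq_right h, max_eq_left (by linarith)]; ring
  · rw [max_eq_left h, max_eq_right (by linarith)]; ring

end more

lemma phi_herm {n : ℕ} (Φ : Matrix (Fin n) (Fin n) ℂ →ₗ[ℂ] Matrix (Fin n) (Fin n) ℂ)
    (hΦpos : ∀ y : Matrix (Fin n) (Fin n) ℂ, y.PosSemidef → (Φ y).PosSemidef)
    {y : Matrix (Fin n) (Fin n) ℂ} (hy : y.IsHermitian) : (Φ y).IsHermitian := by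
  have hdec : y = matFun hy (fun t => max t 0) - matFun hy (fun t => max (-t) 0) := by
    rw [← matFun_sub hy]
    simp_rw [max_sub_max_neg]
    exact (matFun_id hy).symm
  have h1 : (Φ (matFun hy (fun t => max t 0))).PosSemidef :=
    hΦpos _ (matFun_psd hy _ fun i => le_max_right _ _)
  have h2 : (Φ (matFun hy (fun t => max (-t) 0))).PosSemidef :=
    hΦpos _ (matFun_psd hy _ fun i => le_max_right _ _)
  rw [hdec, map_sub]
  exact h1.1.sub h2.1

lemma exists_bounds {k : ℕ} (lam c : Fin k → ℝ) (hc : ∀ i, 0 ≤ c i)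
    (hw : 0 < ∑ i, c i) (μ : ℝ) (hμ : ∑ i, lam i * c i = μ * ∑ i, c i) :
    ∃ i₀ i₁, c i₀ ≠ 0 ∧ c i₁ ≠ 0 ∧ lam i₀ ≤ μ ∧ μ ≤ lam i₁ := by
  classical
  set T := Finset.univ.filter (fun i => c i ≠ 0) with hT
  have hTne : T.Nonempty := by
    by_contra h
    rw [Finset.not_nonempty_iff_eq_empty] at h
    have : ∑ i, c i = 0 := by
      apply Finset.sum_eq_zero
      intro i _
      by_contra hci
      have : i ∈ T := Finset.mem_filter.mpr ⟨Finset.mem_univ i, hci⟩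
      simp [h] at this
    linarith
  obtain ⟨i₀, hi₀T, hi₀⟩ := T.exists_min_image lam hTne
  obtain ⟨i₁, hi₁T, hi₁⟩ := T.exists_max_image lam hTne
  have hsum : ∀ (d : Fin k → ℝ), ∑ i, d i * c i = ∑ i ∈ T, d i * c i := by
    intro d
    refine (Finset.sum_subset (Finset.subset_univ T) fun i _ hi => ?_).symm
    have : c i = 0 := by simpa [hT] using hi
    rw [this, mul_zero]
  have hlow : lam i₀ * ∑ i, c i ≤ μ * ∑ i, c i := by
    rw [← hμ, Finset.mul_sum, hsum lam, hsum (fun _ => lam i₀)]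
    exact Finset.sum_le_sum fun i hi => mul_le_mul_of_nonneg_right (hi₀ i hi) (hc i)
  have hhigh : μ * ∑ i, c i ≤ lam i₁ * ∑ i, c i := by
    rw [← hμ, Finset.mul_sum, hsum lam, hsum (fun _ => lam i₁)]
    exact Finset.sum_le_sum fun i hi => mul_le_mul_of_nonneg_right (hi₁ i hi) (hc i)
  refine ⟨i₀, i₁, (Finset.mem_filter.mp hi₀T).2, (Finset.mem_filter.mp hi₁T).2, ?_, ?_⟩
  · exact le_of_mul_le_mul_right hlow hw
  · exact le_of_mul_le_mul_right hhigh hw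

/-- **Spectral comparison on an interval where `f` is monotone and nonnegative,
contractive case.** Let `Φ` be a positive linear map on `n×n` matrices with `Φ(1) ≤ 1`
(i.e. `1 - Φ(1)` positive semidefinite), `x` Hermitian, `f` continuous convex with
`f(0) = 0`, and `I` an interval on which `f` is monotone and nonnegative; set
`p = e_I(Φ(x))`. Then `p·Φ(f(x))·p` is positive semidefinite and, for every `s > 0`,
`rank e_(s,∞)(p·f(Φ(x))·p) ≤ rank e_(s,∞)(p·Φ(f(x))·p)`. -/
theorem specProj_rank_le_of_contractive_positive_map {n : ℕ}
    (Φ : Matrix (Fin n) (Fin n) ℂ →ₗ[ℂ] Matrix (Fin n) (Fin n) ℂ)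
    (hΦpos : ∀ y : Matrix (Fin n) (Fin n) ℂ, y.PosSemidef → (Φ y).PosSemidef)
    (hΦ1 : (1 - Φ 1).PosSemidef)
    {x : Matrix (Fin n) (Fin n) ℂ} (hx : x.IsHermitian)
    (f : ℝ → ℝ) (hf : Continuous f) (hconv : ConvexOn ℝ Set.univ f) (hf0 : f 0 = 0)
    (I : Set ℝ) (hI : I.OrdConnected)
    (hmono : MonotoneOn f I ∨ AntitoneOn f I) (hfI : ∀ t ∈ I, 0 ≤ f t) :
    ∀ hΦx : (Φ x).IsHermitian,
      (specProj hΦx I * Φ (matFun hx f) * specProj hΦx I).PosSemidef ∧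
      ∀ s : ℝ, 0 < s →
        ∀ (h1 : (specProj hΦx I * matFun hΦx f * specProj hΦx I).IsHermitian)
          (h2 : (specProj hΦx I * Φ (matFun hx f) * specProj hΦx I).IsHermitian),
          (specProj h1 (Set.Ioi s)).rank ≤ (specProj h2 (Set.Ioi s)).rank := by
  intro hΦx
  classical
  have hMherm : (Φ (matFun hx f)).IsHermitian := phi_herm Φ hΦpos (matFun_isHermitian hx f)
  have hp : (specProj hΦx I).IsHermitian := matFun_isHermitian _ _
  constructor
  · refine Matrix.PosSemidef.of_dotProduct_mulVec_nonneg ?_ ?_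
    · show (specProj hΦx I * Φ (matFun hx f) * specProj hΦx I)ᴴ = _
      rw [conjTranspose_mul, conjTranspose_mul, hp.eq, hMherm.eq, mul_assoc]
    · intro ξ
      rw [compress_quadform hp]
      set ζ := specProj hΦx I *ᵥ ξ with hζdef
      have him : (star ζ ⬝ᵥ (Φ (matFun hx f) *ᵥ ζ)).im = 0 := herm_quadform_im hMherm ζ
      rw [Complex.le_def]
      refine ⟨?_, by simp [him]⟩
      simp only [Complex.zero_re]
      set c := fun i => Complex.normSq (eta hΦx ζ i) with hc
      set w := ∑ i, c i with hwdef
      have hwnn : 0 ≤ w := Finset.sum_nonneg fun i _ => Complex.normSq_nonneg _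
      have hsupp : ∀ i, eta hΦx ζ i ≠ 0 → hΦx.eigenvalues i ∈ I := by
        intro i hne
        by_contra hni
        apply hne
        rw [hζdef, specProj, eta_matFun_mulVec, Set.indicator_of_notMem hni]
        simp
      rcases eq_or_lt_of_le hwnn with hw0 | hwpos
      · have hζ0 : ζ = 0 := by
          apply eq_zero_of_eta_zero hΦx
          intro i
          have hci : c i = 0 := by
            have := (Finset.sum_eq_zero_iff_of_nonneg
              (fun i _ => Complex.normSq_nonneg (eta hΦx ζ i))).mp hw0.symm i (Finset.mem_univ i)
            exact this
          exact Complex.normSq_eq_zero.mp hci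
        rw [hζ0]
        simp
      · set μ := (∑ i, hΦx.eigenvalues i * c i) / w with hμdef
        have hμ : ∑ i, hΦx.eigenvalues i * c i = μ * w := by
          rw [hμdef, div_mul_cancel₀ _ (ne_of_gt hwpos)]
        obtain ⟨i₀, i₁, h0, h1', hle0, hle1⟩ :=
          exists_bounds hΦx.eigenvalues c (fun i => Complex.normSq_nonneg _) hwpos μ hμ
        have hK0 : hΦx.eigenvalues i₀ ∈ I :=
          hsupp i₀ fun h => h0 (by simp [hc, h])
        have hK1 : hΦx.eigenvalues i₁ ∈ I :=
          hsupp i₁ fun h => h1' (by simp [hc, h])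
        have hμI : μ ∈ I := hI.out hK0 hK1 ⟨hle0, hle1⟩
        have hcore := jensen_core Φ hΦpos hΦ1 hx f hconv hf0 hΦx ζ μ hμ
        have : 0 ≤ f μ * w := mul_nonneg (hfI μ hμI) hwnn
        linarith
  · intro s hs h1 h2
    have hpFp : specProj hΦx I * matFun hΦx f * specProj hΦx I
        = matFun hΦx (fun t => Set.indicator I 1 t * f t * Set.indicator I 1 t) := by
      rw [specProj, matFun_mul, matFun_mul]
    set g₀ : ℝ → ℝ := fun t => Set.indicator I 1 t * f t * Set.indicator I 1 t with hg₀
    set h₁ : ℝ → ℝ := fun t => Set.indicator (Set.Ioi s) 1 (g₀ t) with hh₁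
    have hiff : ∀ t, h₁ t ≠ 0 ↔ (t ∈ I ∧ s < f t) := by
      intro t
      by_cases ht : t ∈ I
      · simp [hh₁, hg₀, Set.indicator_of_mem ht, Set.indicator_apply, Set.mem_Ioi, ht]
      · simp [hh₁, hg₀, Set.indicator_of_notMem ht, Set.indicator_apply, Set.mem_Ioi, ht,
          not_lt.mpr hs.le]
    have hq1 : specProj h1 (Set.Ioi s) = matFun hΦx h₁ := by
      rw [specProj, matFun_congr h1 (matFun_isHermitian hΦx g₀) hpFp, matFun_comp]
    have hcard1 : (specProj h1 (Set.Ioi s)).rank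
        = Fintype.card {i // hΦx.eigenvalues i ∈ I ∧ s < f (hΦx.eigenvalues i)} := by
      rw [hq1, matFun_rank]
      exact Fintype.card_congr (Equiv.subtypeEquivRight fun i => hiff (hΦx.eigenvalues i))
    have hcard2 : (specProj h2 (Set.Ioi s)).rank
        = Fintype.card {j // s < h2.eigenvalues j} := by
      rw [specProj, matFun_rank]
      exact Fintype.card_congr (Equiv.subtypeEquivRight fun j => by
        simp [Set.indicator_apply, Set.mem_Ioi])
    by_contra hcon
    push_neg at hcon
    rw [hcard1, hcard2] at hcon
    set r1 := Fintype.card {i // hΦx.eigenvalues i ∈ I ∧ s < f (hΦx.eigenvalues i)} with hr1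
    set r2 := Fintype.card {j // s < h2.eigenvalues j} with hr2
    have hcard3 : (matFun h2 (Set.indicator (Set.Iic s) 1)).rank = n - r2 := by
      rw [matFun_rank]
      rw [show Fintype.card {j // Set.indicator (Set.Iic s) (1 : ℝ → ℝ) (h2.eigenvalues j) ≠ 0}
          = Fintype.card {j // ¬ s < h2.eigenvalues j} from
        Fintype.card_congr (Equiv.subtypeEquivRight fun j => by
          simp [Set.indicator_apply, Set.mem_Iic, not_lt])]
      rw [Fintype.card_subtype_compl, Fintype.card_fin]
    set V1 := LinearMap.range (matFun hΦx h₁).mulVecLin with hV1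
    set W := LinearMap.range (matFun h2 (Set.indicator (Set.Iic s) 1)).mulVecLin with hW
    have hfV1 : Module.finrank ℂ V1 = r1 := by
      rw [← hcard1, hq1]; rfl
    have hfW : Module.finrank ℂ W = n - r2 := by
      rw [← hcard3]; rfl
    have hsum := Submodule.finrank_sup_add_finrank_inf_eq V1 W
    have hsup : Module.finrank ℂ ↥(V1 ⊔ W) ≤ n := by
      refine le_trans (Submodule.finrank_le _) ?_
      rw [Module.finrank_fintype_fun_eq_card, Fintype.card_fin]
    have hr2n : r2 ≤ n := by
      simpa using Fintype.card_subtype_le (fun j => s < h2.eigenvalues j)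
    have hpos : 0 < Module.finrank ℂ ↥(V1 ⊓ W) := by omega
    have hnt : Nontrivial ↥(V1 ⊓ W) := Module.finrank_pos_iff.mp hpos
    obtain ⟨ξ', hξ'⟩ := exists_ne (0 : ↥(V1 ⊓ W))
    have hξ0 : (ξ' : Fin n → ℂ) ≠ 0 := fun h => hξ' (Subtype.ext h)
    set ξ := (ξ' : Fin n → ℂ) with hξdef
    obtain ⟨hmem1, hmem2⟩ := ξ'.2
    obtain ⟨ζ₁, hζ₁⟩ := hmem1
    obtain ⟨ζ₂, hζ₂⟩ := hmem2
    rw [mulVecLin_apply] at hζ₁ hζ₂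
    rw [← hξdef] at hζ₁ hζ₂
    have hsupp1 : ∀ i, eta hΦx ξ i ≠ 0 →
        (hΦx.eigenvalues i ∈ I ∧ s < f (hΦx.eigenvalues i)) := by
      intro i hne
      by_contra hni
      have h0 : h₁ (hΦx.eigenvalues i) = 0 := by
        by_contra hh; exact hni ((hiff _).mp hh)
      apply hne
      rw [← hζ₁, eta_matFun_mulVec, h0]
      simp
    have hpξ : specProj hΦx I *ᵥ ξ = ξ := by
      have hind : (fun t => Set.indicator I (1 : ℝ → ℝ) t * h₁ t) = h₁ := by
        funext t
        by_cases ht : t ∈ I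
        · simp [Set.indicator_of_mem ht]
        · have h0 : h₁ t = 0 := by
            by_contra hh; exact ht ((hiff t).mp hh).1
          simp [h0]
      conv_lhs => rw [← hζ₁]
      rw [mulVec_mulVec, specProj, matFun_mul, hind, hζ₁]
    set c := fun i => Complex.normSq (eta hΦx ξ i) with hc
    set w := ∑ i, c i with hwdef
    have hwnn : 0 ≤ w := Finset.sum_nonneg fun i _ => Complex.normSq_nonneg _
    have hwpos : 0 < w := by
      rcases eq_or_lt_of_le hwnn with hw0 | h
      · exfalso
        apply hξ0
        apply eq_zero_of_eta_zero hΦx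
        intro i
        exact Complex.normSq_eq_zero.mp ((Finset.sum_eq_zero_iff_of_nonneg
          (fun i _ => Complex.normSq_nonneg (eta hΦx ξ i))).mp hw0.symm i (Finset.mem_univ i))
      · exact h
    set μ := (∑ i, hΦx.eigenvalues i * c i) / w with hμdef
    have hμ : ∑ i, hΦx.eigenvalues i * c i = μ * w := by
      rw [hμdef, div_mul_cancel₀ _ (ne_of_gt hwpos)]
    obtain ⟨i₀, i₁, h0, h1', hle0, hle1⟩ :=
      exists_bounds hΦx.eigenvalues c (fun i => Complex.normSq_nonneg _) hwpos μ hμ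
    have hK0 := hsupp1 i₀ fun h => h0 (by simp [hc, h])
    have hK1 := hsupp1 i₁ fun h => h1' (by simp [hc, h])
    have hμI : μ ∈ I := hI.out hK0.1 hK1.1 ⟨hle0, hle1⟩
    have hfμ : s < f μ := by
      rcases hmono with hm | hm
      · exact lt_of_lt_of_le hK0.2 (hm hK0.1 hμI hle0)
      · exact lt_of_lt_of_le hK1.2 (hm hμI hK1.1 hle1)
    have hcore := jensen_core Φ hΦpos hΦ1 hx f hconv hf0 hΦx ξ μ hμ
    have hlow : s * w < (star ξ ⬝ᵥ ((specProj hΦx I * Φ (matFun hx f) * specProj hΦx I) *ᵥ ξ)).re := by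
      rw [compress_quadform hp, hpξ]
      calc s * w < f μ * w := mul_lt_mul_of_pos_right hfμ hwpos
        _ ≤ _ := hcore
    have hup : (star ξ ⬝ᵥ ((specProj hΦx I * Φ (matFun hx f) * specProj hΦx I) *ᵥ ξ)).re ≤ s * w := by
      have hqf := quadform_eq h2 (fun t => t) ξ
      rw [matFun_id h2] at hqf
      rw [hqf]
      rw [Complex.ofReal_re]
      set c₂ := fun j => Complex.normSq (eta h2 ξ j) with hc₂
      have hsupp2 : ∀ j, eta h2 ξ j ≠ 0 → h2.eigenvalues j ≤ s := by
        intro j hne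
        by_contra hgt
        push_neg at hgt
        apply hne
        rw [← hζ₂, eta_matFun_mulVec,
          Set.indicator_of_notMem (by simpa [Set.mem_Iic, not_le] using hgt)]
        simp
      have hterm : ∀ j, h2.eigenvalues j * c₂ j ≤ s * c₂ j := by
        intro j
        by_cases hcj : c₂ j = 0
        · simp [hcj]
        · exact mul_le_mul_of_nonneg_right
            (hsupp2 j fun h => hcj (by simp [hc₂, h])) (Complex.normSq_nonneg _)
      have hww : ∑ j, c₂ j = w := by
        have e1 := norm_sq_eq hΦx ξ
        have e2 := norm_sq_eq h2 ξ
        have e3 := e1.symm.trans e2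
        rw [hwdef]
        exact_mod_cast e3.symm
      calc ∑ j, h2.eigenvalues j * c₂ j ≤ ∑ j, s * c₂ j :=
            Finset.sum_le_sum fun j _ => hterm j
        _ = s * w := by rw [← Finset.mul_sum, hww]
    linarith
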